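/- Under the hypotheses of the previous statement, the group homomorphism from the free product (k_0,+) * (k_0,+) to Aut(A), sending the word m_z * n_z * ⋯ * m_1 * n_1 to h^{m_z} g^{n_z} ⋯ h^{m_1} g^{n_1}, is injective. Consequently, if k_0 ≠ ℤ/2, then Aut(A) contains a free subgroup of rank two. -/

import Mathlib

noncomputable section

open Polynomial

namespace Stmt11Aux

variable {k : Type} [CommRing k] {A : Type} [Ring A] [Algebra k A] (k0 : Subring k)

/-- Evaluation of a polynomial over `k0` at an element `W` of `A`. -/
noncomputable def pev (W : A) (p : Polynomial k0) : A :=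
  Polynomial.eval₂ ((algebraMap k A).comp k0.subtype) W p

lemma pev_add (W : A) (p q : Polynomial k0) :
    pev k0 W (p + q) = pev k0 W p + pev k0 W q := eval₂_add _ _

lemma pev_sub (W : A) (p q : Polynomial k0) :
    pev k0 W (p - q) = pev k0 W p - pev k0 W q := eval₂_sub _

lemma pev_one (W : A) : pev k0 W (1 : Polynomial k0) = 1 := eval₂_one _ _

lemma pev_C_mul (W : A) (c : k0) (p : Polynomial k0) :
    pev k0 W (C c * p) = (c : k) • pev k0 W p := by
  rw [pev, ← smul_eq_C_mul, eval₂_smul, Algebra.smul_def]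
  rfl

lemma pev_mul_X (W : A) (p : Polynomial k0) :
    pev k0 W (p * X) = pev k0 W p * W := eval₂_mul_X _ _

lemma pev_monomial (W : A) (n : ℕ) (c : k0) :
    pev k0 W (monomial n c) = algebraMap k A (c : k) * W ^ n := by
  rw [pev, eval₂_monomial]; rfl

lemma pev_eq_sum (W : A) (p : Polynomial k0) :
    pev k0 W p = ∑ i ∈ Finset.range (p.natDegree + 1), ((p.coeff i : k)) • W ^ i := by
  rw [pev, eval₂_eq_sum_range' _ (Nat.lt_succ_self _)]
  exact Finset.sum_congr rfl fun i _ => by rw [Algebra.smul_def]; rfl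

lemma pev_mem {R : Subalgebra k A} {W : A} (hW : W ∈ R) (p : Polynomial k0) :
    pev k0 W p ∈ R := by
  rw [pev_eq_sum]
  exact Subalgebra.sum_mem _ fun i _ => Subalgebra.smul_mem _ (pow_mem hW i) _

lemma conj_pow (a1 b1 : A) (n : ℕ) :
    a1 * (b1 * a1) ^ n * b1 = (a1 * b1) ^ (n + 1) := by
  induction n with
  | zero => simp
  | succ n ih =>
    rw [pow_succ (b1 * a1) n, pow_succ (a1 * b1) (n + 1), ← ih]
    simp only [mul_assoc]

lemma conj_pev (a1 b1 : A) (p : Polynomial k0) :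
    a1 * pev k0 (b1 * a1) p * b1 = pev k0 (a1 * b1) (p * X) := by
  induction p using Polynomial.induction_on' with
  | add p q hp hq =>
    rw [add_mul, pev_add, mul_add, add_mul, hp, hq, pev_add]
  | monomial n c =>
    rw [monomial_mul_X, pev_monomial, pev_monomial, ← conj_pow a1 b1 n]
    rw [← mul_assoc, ← mul_assoc, ← Algebra.commutes ((c : k)) a1, mul_assoc, mul_assoc,
      mul_assoc, mul_assoc]

variable [IsDomain k]

/-- The ping-pong sets: elements of the form `r0 + P(W)·y + Q(W)·zt` with the dominance
condition on degrees specified by `str`. -/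
def OrbSet (R : Subalgebra k A) (W y zt : A) (str : Bool) (a : A) : Prop :=
  ∃ r0 ∈ R, ∃ P Q : Polynomial k0,
    a = r0 + pev k0 W P * y + pev k0 W Q * zt ∧
      (if str then Q.degree < P.degree ∧ 1 ≤ P.degree else P.degree ≤ Q.degree ∧ Q ≠ 0)

variable {k0}

lemma stepA {R : Subalgebra k A} {W y zt α0 : A} (hW : W ∈ R) (hα0 : α0 ∈ R)
    (φ : A ≃ₐ[k] A) (hR : ∀ r ∈ R, φ r = r)
    {c : k0} (hc : c ≠ 0) (hφy : φ y = y + (c : k) • α0 + (c : k) • zt) (hφzt : φ zt = zt)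
    {a : A} (ha : OrbSet k0 R W y zt true a) : OrbSet k0 R W y zt false (φ a) := by
  obtain ⟨r0, hr0, P, Q, rfl, hQP, h1P⟩ := ha
  unfold OrbSet
  refine ⟨r0 + (c : k) • (pev k0 W P * α0),
      add_mem hr0 (Subalgebra.smul_mem _ (mul_mem (pev_mem k0 hW P) hα0) _),
      P, Q + C c * P, ?_, ?_⟩
  · rw [map_add, map_add, map_mul, map_mul, hR _ hr0, hR _ (pev_mem k0 hW P),
      hR _ (pev_mem k0 hW Q), hφzt, hφy, pev_add, pev_C_mul, add_mul, smul_mul_assoc,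
      mul_add, mul_add, mul_smul_comm, mul_smul_comm]
    abel
  · have hdeg : (C c * P).degree = P.degree := degree_C_mul hc
    have hlt : Q.degree < (C c * P).degree := by rw [hdeg]; exact hQP
    have hsum : (Q + C c * P).degree = P.degree := by
      rw [degree_add_eq_right_of_degree_lt hlt, hdeg]
    simp only [if_false, Bool.false_eq_true]
    refine ⟨le_of_eq hsum.symm, fun h0 => ?_⟩
    rw [h0, degree_zero] at hsum
    rw [← hsum] at h1P
    exact absurd h1P (by simp)



lemma stepB {R : Subalgebra k A} {W y zt γ0 : A} (hW : W ∈ R) (hγ0 : γ0 ∈ R)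
    (φ : A ≃ₐ[k] A) (hR : ∀ r ∈ R, φ r = r)
    {c : k0} (hc : c ≠ 0) (hφy : φ y = y) (hφzt : φ zt = zt + (c : k) • γ0 + (c : k) • (W * y))
    {a : A} (ha : OrbSet k0 R W y zt false a) : OrbSet k0 R W y zt true (φ a) := by
  obtain ⟨r0, hr0, P, Q, rfl, hPQ, hQ⟩ := ha
  unfold OrbSet
  refine ⟨r0 + (c : k) • (pev k0 W Q * γ0),
    add_mem hr0 (Subalgebra.smul_mem _ (mul_mem (pev_mem k0 hW Q) hγ0) _),
    P + C c * (Q * X), Q, ?_, ?_⟩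
  · rw [map_add, map_add, map_mul, map_mul, hR _ hr0, hR _ (pev_mem k0 hW P),
      hR _ (pev_mem k0 hW Q), hφzt, hφy, pev_add, pev_C_mul, pev_mul_X, add_mul,
      smul_mul_assoc, mul_add, mul_add, mul_smul_comm, mul_smul_comm, mul_assoc]
    abel
  · have hqx : Q.degree < (Q * X).degree := degree_lt_degree_mul_X hQ
    have hcqx : (C c * (Q * X)).degree = (Q * X).degree := degree_C_mul hc
    have hPlt : P.degree < (C c * (Q * X)).degree := by rw [hcqx]; exact lt_of_le_of_lt hPQ hqx
    have hP' : (P + C c * (Q * X)).degree = (Q * X).degree := by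
      rw [degree_add_eq_right_of_degree_lt hPlt, hcqx]
    simp only [if_true]
    constructor
    · rw [hP']; exact hqx
    · rw [hP', Nat.WithBot.one_le_iff_zero_lt]
      exact lt_of_le_of_lt (zero_le_degree_iff.mpr hQ) hqx

section NeWordLemmas

open Monoid

variable {HH G α : Type} [Group HH] [Group G]

lemma nw_mapping (f' : Bool → (HH →* G)) (act : G → α → α)
    (hactmul : ∀ g₁ g₂ a, act (g₁ * g₂) a = act g₁ (act g₂ a))
    (T : Bool → α → Prop)
    (hstep : ∀ (s : Bool) (c : HH), c ≠ 1 → ∀ a, T (!s) a → T s (act (f' s c) a)) :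
    ∀ {i j : Bool} (w : CoprodI.NeWord (fun _ : Bool => HH) i j) {s : Bool}, s ≠ j →
    ∀ {a : α}, T s a → T i (act (CoprodI.lift f' w.prod) a) := by
  intro i j w
  induction w with
  | @singleton i x hne =>
    intro s hs a ha
    rw [CoprodI.NeWord.prod_singleton, CoprodI.lift_of]
    exact hstep _ x hne a ((Bool.eq_not_iff.mpr hs) ▸ ha)
  | @append i j' k' l w₁ hne w₂ ih₁ ih₂ =>
    intro s hs a ha
    rw [CoprodI.NeWord.append_prod, map_mul, hactmul]
    exact ih₁ hne.symm (ih₂ hs ha)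

lemma nw_claim (f' : Bool → (HH →* G)) (act : G → α → α)
    (hactmul : ∀ g₁ g₂ a, act (g₁ * g₂) a = act g₁ (act g₂ a))
    (T : Bool → α → Prop)
    (hstep : ∀ (s : Bool) (c : HH), c ≠ 1 → ∀ a, T (!s) a → T s (act (f' s c) a))
    (s₀ : Bool) (p : α)
    (hfix : ∀ c : HH, act (f' s₀ c) p = p)
    (hbase : ∀ c : HH, c ≠ 1 → T (!s₀) (act (f' (!s₀) c) p)) :
    ∀ {i j : Bool} (w : CoprodI.NeWord (fun _ : Bool => HH) i j),
      T i (act (CoprodI.lift f' w.prod) p) ∨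
        (act (CoprodI.lift f' w.prod) p = p ∧ i = s₀ ∧ j = s₀) := by
  intro i j w
  induction w with
  | @singleton i x hne =>
    rw [CoprodI.NeWord.prod_singleton, CoprodI.lift_of]
    by_cases hi : i = s₀
    · refine Or.inr ⟨?_, hi, hi⟩
      rw [hi]; exact hfix x
    · have hi' : i = !s₀ := Bool.eq_not_iff.mpr hi
      rw [hi']
      exact Or.inl (hbase x hne)
  | @append i j' k' l w₁ hne w₂ ih₁ ih₂ =>
    rw [CoprodI.NeWord.append_prod, map_mul, hactmul]
    rcases ih₂ with h2 | ⟨h2, hk, hl⟩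
    · exact Or.inl (nw_mapping f' act hactmul T hstep w₁ hne.symm h2)
    · subst hk; subst hl
      rw [h2]
      rcases ih₁ with h1 | ⟨h1, hi, hj⟩
      · exact Or.inl h1
      · exact absurd hj hne

lemma nw_injective (f' : Bool → (HH →* G))
    (key : ∀ {i j : Bool} (w : CoprodI.NeWord (fun _ : Bool => HH) i j),
      CoprodI.lift f' w.prod ≠ 1) : Function.Injective (CoprodI.lift f') := by
  classical
  apply (injective_iff_map_eq_one (CoprodI.lift f')).mpr
  rw [(CoprodI.Word.equiv).forall_congr_left]
  intro w Heq
  dsimp [CoprodI.Word.equiv] at *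
  have hempty : w = CoprodI.Word.empty := by
    by_contra hne
    obtain ⟨i, j, w', rfl⟩ := CoprodI.NeWord.of_word w hne
    exact key w' Heq
  rw [hempty, CoprodI.Word.prod_empty]

end NeWordLemmas


section FreeGroupLemma

open Monoid

variable {HH G : Type} [Group HH] [Group G]

/-- No-cancellation property of a list of letters. -/
def NC (L : List (Fin 2 × Bool)) : Prop :=
  ∀ (L₂ L₃ : List (Fin 2 × Bool)) (y : Fin 2) (b : Bool), L ≠ L₂ ++ (y, b) :: (y, !b) :: L₃

lemma NC.tail {p : Fin 2 × Bool} {L : List (Fin 2 × Bool)} (h : NC (p :: L)) : NC L := by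
  intro L₂ L₃ y b hEq
  exact h (p :: L₂) L₃ y b (by rw [hEq]; rfl)

lemma NC.head2 {p q : Fin 2 × Bool} {L : List (Fin 2 × Bool)} (h : NC (p :: q :: L)) :
    ¬(q.1 = p.1 ∧ q.2 = !p.2) := by
  rintro ⟨h1, h2⟩
  obtain ⟨pi, pb⟩ := p
  obtain ⟨qi, qb⟩ := q
  dsimp at h1 h2
  subst h1; subst h2
  exact h [] L qi pb rfl

lemma fg_claim (f' : Bool → (HH →* G)) (M N : Fin 2 → HH)
    (hM : ∀ i, M i ≠ 1) (hN : ∀ i, N i ≠ 1)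
    (hMinj : ∀ i i' : Fin 2, i ≠ i' → M i ≠ M i')
    (hNinj : ∀ i i' : Fin 2, i ≠ i' → N i ≠ N i') :
    ∀ (L : List (Fin 2 × Bool)) (p : Fin 2 × Bool), NC (p :: L) →
      ∃ (jj : Bool) (w : CoprodI.NeWord (fun _ : Bool => HH) p.2 jj),
        w.head = cond p.2 (M p.1) (N p.1)⁻¹ ∧
        CoprodI.lift f' w.prod =
          ((p :: L).map fun q => cond q.2 (f' true (M q.1) * f' false (N q.1))
            (f' true (M q.1) * f' false (N q.1))⁻¹).prod := by
  intro L
  induction L with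
  | nil =>
    rintro ⟨pi, pb⟩ _
    cases pb
    · refine ⟨true, CoprodI.NeWord.append
        (CoprodI.NeWord.singleton (i := false) (N pi)⁻¹ (inv_ne_one.mpr (hN pi)))
        (by decide) (CoprodI.NeWord.singleton (i := true) (M pi)⁻¹ (inv_ne_one.mpr (hM pi))),
        ?_, ?_⟩
      · rfl
      · simp only [CoprodI.NeWord.append_prod, CoprodI.NeWord.prod_singleton, map_mul,
          CoprodI.lift_of, List.map_cons, List.map_nil, List.prod_cons, List.prod_nil, mul_one,
          cond_false, mul_inv_rev, map_inv]
    · refine ⟨false, CoprodI.NeWord.append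
        (CoprodI.NeWord.singleton (i := true) (M pi) (hM pi)) (by decide)
        (CoprodI.NeWord.singleton (i := false) (N pi) (hN pi)), ?_, ?_⟩
      · rfl
      · simp only [CoprodI.NeWord.append_prod, CoprodI.NeWord.prod_singleton, map_mul,
          CoprodI.lift_of, List.map_cons, List.map_nil, List.prod_cons, List.prod_nil, mul_one,
          cond_true]
  | cons p' L'' ih =>
    obtain ⟨pi', pb'⟩ := p'
    rintro ⟨pi, pb⟩ hNC
    obtain ⟨jj, w', hhead, hprod⟩ := ih (pi', pb') hNC.tail
    have hne2 := hNC.head2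
    dsimp only at hne2 hhead w' hprod
    cases pb
    · -- p = (pi, false) : block ends (innermost) at side `true`
      cases pb'
      · -- no merge
        refine ⟨jj, CoprodI.NeWord.append
          (CoprodI.NeWord.append
            (CoprodI.NeWord.singleton (i := false) (N pi)⁻¹ (inv_ne_one.mpr (hN pi)))
            (by decide) (CoprodI.NeWord.singleton (i := true) (M pi)⁻¹ (inv_ne_one.mpr (hM pi))))
          (by decide) w', ?_, ?_⟩
        · rfl
        · simp only [CoprodI.NeWord.append_prod, CoprodI.NeWord.prod_singleton, map_mul,
            CoprodI.lift_of, List.map_cons, List.prod_cons, cond_false, mul_inv_rev, map_inv,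
            hprod, mul_assoc]
      · -- merge : w' starts at side `true` with head `M pi'`
        have hii : pi' ≠ pi := fun h => hne2 ⟨h, rfl⟩
        have hmerge : (M pi)⁻¹ * w'.head ≠ 1 := by
          rw [hhead]
          simp only [cond_true, ne_eq, inv_mul_eq_one]
          exact hMinj pi pi' (Ne.symm hii)
        refine ⟨jj, CoprodI.NeWord.append
          (CoprodI.NeWord.singleton (i := false) (N pi)⁻¹ (inv_ne_one.mpr (hN pi)))
          (by decide) (CoprodI.NeWord.mulHead w' (M pi)⁻¹ hmerge), ?_, ?_⟩
        · rfl
        · simp only [CoprodI.NeWord.append_prod, CoprodI.NeWord.prod_singleton,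
            CoprodI.NeWord.mulHead_prod, map_mul, CoprodI.lift_of, List.map_cons, List.prod_cons,
            cond_false, cond_true, mul_inv_rev, map_inv, hprod, mul_assoc]
    · -- p = (pi, true) : block ends (innermost) at side `false`
      cases pb'
      · -- merge : w' starts at side `false` with head `(N pi')⁻¹`
        have hii : pi' ≠ pi := fun h => hne2 ⟨h, rfl⟩
        have hmerge : N pi * w'.head ≠ 1 := by
          rw [hhead]
          simp only [cond_false, ne_eq, mul_inv_eq_one]
          exact hNinj pi pi' (Ne.symm hii)
        refine ⟨jj, CoprodI.NeWord.append
          (CoprodI.NeWord.singleton (i := true) (M pi) (hM pi))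
          (by decide) (CoprodI.NeWord.mulHead w' (N pi) hmerge), ?_, ?_⟩
        · rfl
        · simp only [CoprodI.NeWord.append_prod, CoprodI.NeWord.prod_singleton,
            CoprodI.NeWord.mulHead_prod, map_mul, CoprodI.lift_of, List.map_cons, List.prod_cons,
            cond_false, cond_true, mul_inv_rev, map_inv, hprod, mul_assoc]
      · -- no merge
        refine ⟨jj, CoprodI.NeWord.append
          (CoprodI.NeWord.append
            (CoprodI.NeWord.singleton (i := true) (M pi) (hM pi))
            (by decide) (CoprodI.NeWord.singleton (i := false) (N pi) (hN pi)))
          (by decide) w', ?_, ?_⟩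
        · rfl
        · simp only [CoprodI.NeWord.append_prod, CoprodI.NeWord.prod_singleton, map_mul,
            CoprodI.lift_of, List.map_cons, List.prod_cons, cond_true, hprod, mul_assoc]

lemma fg_injective (f' : Bool → (HH →* G))
    (key : ∀ {i j : Bool} (w : CoprodI.NeWord (fun _ : Bool => HH) i j),
      CoprodI.lift f' w.prod ≠ 1)
    (M N : Fin 2 → HH) (hM : ∀ i, M i ≠ 1) (hN : ∀ i, N i ≠ 1)
    (hMinj : ∀ i i' : Fin 2, i ≠ i' → M i ≠ M i')
    (hNinj : ∀ i i' : Fin 2, i ≠ i' → N i ≠ N i') :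
    Function.Injective (FreeGroup.lift fun i => f' true (M i) * f' false (N i)) := by
  apply (injective_iff_map_eq_one _).mpr
  intro z hz
  by_contra hzne
  have hL : z.toWord ≠ [] := fun h => hzne (FreeGroup.toWord_eq_nil_iff.mp h)
  have hNC : NC z.toWord := by
    intro L₂ L₃ y b hEq
    have hred := FreeGroup.reduce_toWord z
    rw [hEq] at hred
    exact FreeGroup.reduce.not hred
  obtain ⟨p, L, hcons⟩ : ∃ p L, z.toWord = p :: L := by
    cases hLl : z.toWord with
    | nil => exact absurd hLl hL
    | cons a l => exact ⟨a, l, rfl⟩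
  rw [hcons] at hNC
  obtain ⟨jj, w, -, hprod⟩ := fg_claim f' M N hM hN hMinj hNinj L p hNC
  apply key w
  rw [hprod]
  have hzz : z = FreeGroup.mk z.toWord := FreeGroup.mk_toWord.symm
  rw [hzz, FreeGroup.lift_mk, hcons] at hz
  exact hz

end FreeGroupLemma


end Stmt11Aux

open Polynomial Monoid Stmt11Aux

/-- Under the hypotheses of the previous statement (and with `g`, `h` additive in
their parameters), the group homomorphism `(k_0,+) * (k_0,+) → Aut(A)` sending the
word `m_z * n_z * ⋯ * m_1 * n_1` to `h^{m_z} g^{n_z} ⋯ h^{m_1} g^{n_1}` is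
injective; consequently, if `k_0 ≠ ℤ/2`, then `Aut(A)` contains a free subgroup
of rank two.  (Generators indexed `x_0, …, x_{t-1}`.) -/
theorem stmt11 (k A : Type) [CommRing k] [IsDomain k] [Ring A] [Algebra k A]
    (t : ℕ) (ht : 3 ≤ t) (x : ℕ → A)
    (hgen : Algebra.adjoin k (x '' {i | i < t}) = ⊤)
    (a0 a1 b0 b1 : A)
    (hmem : ∀ c ∈ ({a0, a1, b0, b1} : Set A),
      c ∈ Algebra.adjoin k (x '' {i | 2 ≤ i ∧ i < t}))
    (g h : k → (A ≃ₐ[k] A))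
    (hg : ∀ n : k, (g n) (x 0) = x 0 + n • a0 + n • (a1 * x 1) ∧
      ∀ i, i ≠ 0 → (g n) (x i) = x i)
    (hh : ∀ m : k, (h m) (x 1) = x 1 + m • b0 + m • (b1 * x 0) ∧
      ∀ i, i ≠ 1 → (h m) (x i) = x i)
    (hgadd : ∀ n n' : k, g (n + n') = g n * g n')
    (hhadd : ∀ m m' : k, h (m + m') = h m * h m')
    -- `R + R x_1 + R x_2` is a free left `R`-module with basis `{1, x_1, x_2}`:
    (hfree : ∀ r0 r1 r2 : A,
      r0 ∈ Algebra.adjoin k (x '' {i | 2 ≤ i ∧ i < t}) →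
      r1 ∈ Algebra.adjoin k (x '' {i | 2 ≤ i ∧ i < t}) →
      r2 ∈ Algebra.adjoin k (x '' {i | 2 ≤ i ∧ i < t}) →
      r0 + r1 * x 0 + r2 * x 1 = 0 → r0 = 0 ∧ r1 = 0 ∧ r2 = 0)
    (k0 : Subring k)
    -- `a_1 b_1` is transcendental over `k_0`:
    (htr : ∀ (N : ℕ) (c : ℕ → k), (∀ i, c i ∈ k0) → c N ≠ 0 →
      ∑ i ∈ Finset.range (N + 1), c i • (a1 * b1) ^ i ≠ 0)
    (F1 F2 : Multiplicative k0 →* (A ≃ₐ[k] A))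
    (hF1 : ∀ m : k0, F1 (Multiplicative.ofAdd m) = h (m : k))
    (hF2 : ∀ n : k0, F2 (Multiplicative.ofAdd n) = g (n : k)) :
    Function.Injective (Monoid.Coprod.lift F1 F2) ∧
      (Nat.card k0 ≠ 2 →
        ∃ H : Subgroup (A ≃ₐ[k] A), Nonempty (H ≃* FreeGroup (Fin 2))) := by
  classical
  set R := Algebra.adjoin k (x '' {i | 2 ≤ i ∧ i < t}) with hRdef
  have ha0 : a0 ∈ R := hmem a0 (by simp)
  have ha1 : a1 ∈ R := hmem a1 (by simp)
  have hb0 : b0 ∈ R := hmem b0 (by simp)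
  have hb1 : b1 ∈ R := hmem b1 (by simp)
  have huR : a1 * b1 ∈ R := mul_mem ha1 hb1
  have huR' : b1 * a1 ∈ R := mul_mem hb1 ha1
  -- the automorphisms fix R pointwise
  have hfixg : ∀ (n : k), ∀ r ∈ R, g n r = r := by
    intro n r hr
    have hle : R ≤ AlgHom.equalizer (g n : A ≃ₐ[k] A).toAlgHom (AlgHom.id k A) := by
      apply Algebra.adjoin_le
      rintro _ ⟨i, hi, rfl⟩
      simp only [Set.mem_setOf_eq] at hi
      have : (g n) (x i) = x i := (hg n).2 i (by omega)
      simpa [AlgHom.mem_equalizer] using this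
    have := (AlgHom.mem_equalizer _ _ r).mp (hle hr)
    simpa using this
  have hfixh : ∀ (m : k), ∀ r ∈ R, h m r = r := by
    intro m r hr
    have hle : R ≤ AlgHom.equalizer (h m : A ≃ₐ[k] A).toAlgHom (AlgHom.id k A) := by
      apply Algebra.adjoin_le
      rintro _ ⟨i, hi, rfl⟩
      simp only [Set.mem_setOf_eq] at hi
      have : (h m) (x i) = x i := (hh m).2 i (by omega)
      simpa [AlgHom.mem_equalizer] using this
    have := (AlgHom.mem_equalizer _ _ r).mp (hle hr)
    simpa using this
  -- transcendence consequences
  have hT1 : ∀ p : Polynomial k0, p ≠ 0 → pev k0 (a1 * b1) p ≠ 0 := by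
    intro p hp h0
    refine htr p.natDegree (fun i => ((p.coeff i : k))) (fun i => SetLike.coe_mem _) ?_ ?_
    · intro hco
      refine Polynomial.leadingCoeff_ne_zero.mpr hp ?_
      rw [Polynomial.leadingCoeff]
      have hco' : ((p.coeff p.natDegree : k)) = 0 := hco
      exact_mod_cast hco'
    · rw [← pev_eq_sum]; exact h0
  have hT2 : ∀ q : Polynomial k0, q ≠ 0 → pev k0 (a1 * b1) q * a1 ≠ 0 := by
    intro q hq h0
    apply hT1 (q * X) (mul_ne_zero hq Polynomial.X_ne_zero)
    rw [pev_mul_X, ← mul_assoc, h0, zero_mul]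
  have hT1' : ∀ p : Polynomial k0, p ≠ 0 → pev k0 (b1 * a1) p ≠ 0 := by
    intro p hp h0
    apply hT1 (p * X) (mul_ne_zero hp Polynomial.X_ne_zero)
    rw [← conj_pev, h0, mul_zero, zero_mul]
  have hT2' : ∀ q : Polynomial k0, q ≠ 0 → pev k0 (b1 * a1) q * b1 ≠ 0 := by
    intro q hq h0
    apply hT1' (q * X) (mul_ne_zero hq Polynomial.X_ne_zero)
    rw [pev_mul_X, ← mul_assoc, h0, zero_mul]
  -- the two families of monoid homs
  set f' : Bool → (Multiplicative k0 →* (A ≃ₐ[k] A)) := fun b => bif b then F1 else F2 with hf'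
  have hF1' : ∀ c : Multiplicative k0, F1 c = h ((Multiplicative.toAdd c : k0) : k) := by
    intro c; rw [← hF1]; congr 1
  have hF2' : ∀ c : Multiplicative k0, F2 c = g ((Multiplicative.toAdd c : k0) : k) := by
    intro c; rw [← hF2]; congr 1
  have hne0 : ∀ c : Multiplicative k0, c ≠ 1 → (Multiplicative.toAdd c : k0) ≠ 0 := by
    intro c hc h0
    exact hc (by rw [← ofAdd_toAdd c, h0]; rfl)
  -- the action
  set act : (A ≃ₐ[k] A) → A → A := fun φ a => φ a with hact
  have hactmul : ∀ g₁ g₂ : A ≃ₐ[k] A, ∀ a, act (g₁ * g₂) a = act g₁ (act g₂ a) :=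
    fun g₁ g₂ a => AlgEquiv.mul_apply g₁ g₂ a
  -- ping-pong steps for the x 0 - orbit
  have hstepX : ∀ (s : Bool) (c : Multiplicative k0), c ≠ 1 → ∀ a : A,
      OrbSet k0 R (a1 * b1) (x 0) (a1 * x 1) (!s) a →
      OrbSet k0 R (a1 * b1) (x 0) (a1 * x 1) s (act (f' s c) a) := by
    intro s c hc a ha
    have hc0 := hne0 c hc
    cases s
    · show OrbSet k0 R (a1 * b1) (x 0) (a1 * x 1) false ((F2 c) a)
      rw [hF2' c]
      refine stepA huR ha0 _ (hfixg _) hc0 (hg _).1 ?_ ha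
      rw [map_mul, hfixg _ a1 ha1, (hg _).2 1 (by omega)]
    · show OrbSet k0 R (a1 * b1) (x 0) (a1 * x 1) true ((F1 c) a)
      rw [hF1' c]
      refine stepB huR (mul_mem ha1 hb0) _ (hfixh _) hc0 ((hh _).2 0 (by omega)) ?_ ha
      rw [map_mul, hfixh _ a1 ha1, (hh _).1, mul_add, mul_add, mul_smul_comm, mul_smul_comm,
        ← mul_assoc]
  -- ping-pong steps for the x 1 - orbit
  have hstepY : ∀ (s : Bool) (c : Multiplicative k0), c ≠ 1 → ∀ a : A,
      OrbSet k0 R (b1 * a1) (x 1) (b1 * x 0) (!(!s)) a →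
      OrbSet k0 R (b1 * a1) (x 1) (b1 * x 0) (!s) (act (f' s c) a) := by
    intro s c hc a ha
    have hc0 := hne0 c hc
    cases s
    · show OrbSet k0 R (b1 * a1) (x 1) (b1 * x 0) true ((F2 c) a)
      rw [hF2' c]
      refine stepB huR' (mul_mem hb1 ha0) _ (hfixg _) hc0 ((hg _).2 1 (by omega)) ?_ ha
      rw [map_mul, hfixg _ b1 hb1, (hg _).1, mul_add, mul_add, mul_smul_comm, mul_smul_comm,
        ← mul_assoc]
    · show OrbSet k0 R (b1 * a1) (x 1) (b1 * x 0) false ((F1 c) a)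
      rw [hF1' c]
      refine stepA huR' hb0 _ (hfixh _) hc0 (hh _).1 ?_ ha
      rw [map_mul, hfixh _ b1 hb1, (hh _).2 0 (by omega)]
  -- base cases
  have hfixX : ∀ c : Multiplicative k0, act (f' true c) (x 0) = x 0 := by
    intro c
    show (F1 c) (x 0) = x 0
    rw [hF1' c]; exact (hh _).2 0 (by omega)
  have hfixY : ∀ c : Multiplicative k0, act (f' false c) (x 1) = x 1 := by
    intro c
    show (F2 c) (x 1) = x 1
    rw [hF2' c]; exact (hg _).2 1 (by omega)
  have hCone : ∀ (W : A) (c : k0), pev k0 W (C c) = (c : k) • (1 : A) := by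
    intro W c
    rw [← mul_one (C c), pev_C_mul, pev_one]
  have hbaseX : ∀ c : Multiplicative k0, c ≠ 1 →
      OrbSet k0 R (a1 * b1) (x 0) (a1 * x 1) (!true) (act (f' (!true) c) (x 0)) := by
    intro c hc
    have hc0 := hne0 c hc
    show OrbSet k0 R (a1 * b1) (x 0) (a1 * x 1) false ((F2 c) (x 0))
    rw [hF2' c]
    refine ⟨((Multiplicative.toAdd c : k0) : k) • a0, Subalgebra.smul_mem _ ha0 _,
      1, C (Multiplicative.toAdd c), ?_, ?_⟩
    · rw [(hg _).1, pev_one, one_mul, hCone, smul_mul_assoc, one_mul]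
      abel
    · simp only [if_neg (by simp : ¬ (false = true))]
      exact ⟨by rw [degree_one, degree_C hc0], Polynomial.C_ne_zero.mpr hc0⟩
  have hbaseY : ∀ c : Multiplicative k0, c ≠ 1 →
      OrbSet k0 R (b1 * a1) (x 1) (b1 * x 0) (!(!false)) (act (f' (!false) c) (x 1)) := by
    intro c hc
    have hc0 := hne0 c hc
    show OrbSet k0 R (b1 * a1) (x 1) (b1 * x 0) false ((F1 c) (x 1))
    rw [hF1' c]
    refine ⟨((Multiplicative.toAdd c : k0) : k) • b0, Subalgebra.smul_mem _ hb0 _,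
      1, C (Multiplicative.toAdd c), ?_, ?_⟩
    · rw [(hh _).1, pev_one, one_mul, hCone, smul_mul_assoc, one_mul]
      abel
    · simp only [if_neg (by simp : ¬ (false = true))]
      exact ⟨by rw [degree_one, degree_C hc0], Polynomial.C_ne_zero.mpr hc0⟩
  -- the base points are not in the ping-pong sets
  have hnotmemX : ∀ s : Bool, ¬ OrbSet k0 R (a1 * b1) (x 0) (a1 * x 1) s (x 0) := by
    rintro s ⟨r0, hr0, P, Q, heq, hcond⟩
    have h0 : r0 + (pev k0 (a1 * b1) P - 1) * x 0 + (pev k0 (a1 * b1) Q * a1) * x 1 =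
        (r0 + pev k0 (a1 * b1) P * x 0 + pev k0 (a1 * b1) Q * (a1 * x 1)) - x 0 := by
      rw [sub_mul, one_mul, mul_assoc]; abel
    rw [← heq, sub_self] at h0
    obtain ⟨-, h2, h3⟩ := hfree _ _ _ hr0 (sub_mem (pev_mem k0 huR P) (one_mem R))
      (mul_mem (pev_mem k0 huR Q) ha1) h0
    have hQ0 : Q = 0 := by
      by_contra hQ; exact hT2 Q hQ h3
    have hP1 : P = 1 := by
      by_contra hne
      exact hT1 (P - 1) (sub_ne_zero.mpr hne) (by rw [pev_sub, pev_one, h2])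
    cases s
    · exact hcond.2 hQ0
    · have := hcond.2
      rw [hP1, degree_one] at this
      exact absurd this (by decide)
  have hnotmemY : ∀ s : Bool, ¬ OrbSet k0 R (b1 * a1) (x 1) (b1 * x 0) s (x 1) := by
    rintro s ⟨r0, hr0, P, Q, heq, hcond⟩
    have h0 : r0 + (pev k0 (b1 * a1) Q * b1) * x 0 + (pev k0 (b1 * a1) P - 1) * x 1 =
        (r0 + pev k0 (b1 * a1) P * x 1 + pev k0 (b1 * a1) Q * (b1 * x 0)) - x 1 := by
      rw [sub_mul, one_mul, mul_assoc]; abel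
    rw [← heq, sub_self] at h0
    obtain ⟨-, h2, h3⟩ := hfree _ _ _ hr0 (mul_mem (pev_mem k0 huR' Q) hb1)
      (sub_mem (pev_mem k0 huR' P) (one_mem R)) h0
    have hQ0 : Q = 0 := by
      by_contra hQ; exact hT2' Q hQ h2
    have hP1 : P = 1 := by
      by_contra hne
      exact hT1' (P - 1) (sub_ne_zero.mpr hne) (by rw [pev_sub, pev_one, h3])
    cases s
    · exact hcond.2 hQ0
    · have := hcond.2
      rw [hP1, degree_one] at this
      exact absurd this (by decide)
  -- the key nontriviality statement
  have key : ∀ {i j : Bool} (w : Monoid.CoprodI.NeWord (fun _ : Bool => Multiplicative k0) i j),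
      Monoid.CoprodI.lift f' w.prod ≠ 1 := by
    intro i j w hone
    rcases nw_claim f' act hactmul
        (fun s a => OrbSet k0 R (a1 * b1) (x 0) (a1 * x 1) s a) hstepX true (x 0)
        hfixX hbaseX w with hA | ⟨-, hi, hj⟩
    · rw [hone] at hA
      exact hnotmemX i (by simpa [hact] using hA)
    · rcases nw_claim f' act hactmul
          (fun s a => OrbSet k0 R (b1 * a1) (x 1) (b1 * x 0) (!s) a) hstepY false (x 1)
          hfixY hbaseY w with hB | ⟨-, hi', -⟩
      · rw [hone] at hB
        exact hnotmemY (!i) (by simpa [hact] using hB)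
      · rw [hi] at hi'
        exact absurd hi' (by decide)
  have hinj : Function.Injective (Monoid.CoprodI.lift f') :=
    nw_injective f' fun {i j} w => key w
  -- factor the binary coproduct through `CoprodI`
  set e : Monoid.Coprod (Multiplicative k0) (Multiplicative k0) →*
      Monoid.CoprodI (fun _ : Bool => Multiplicative k0) :=
    Monoid.Coprod.lift
      (Monoid.CoprodI.of (M := fun _ : Bool => Multiplicative k0) (i := true))
      (Monoid.CoprodI.of (M := fun _ : Bool => Multiplicative k0) (i := false)) with he
  have hcomp : (Monoid.CoprodI.lift f').comp e = Monoid.Coprod.lift F1 F2 := by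
    apply Monoid.Coprod.hom_ext
    · ext c
      simp [he, Monoid.Coprod.lift_apply_inl, Monoid.CoprodI.lift_of, hf']
    · ext c
      simp [he, Monoid.Coprod.lift_apply_inr, Monoid.CoprodI.lift_of, hf']
  have heinj : Function.Injective e := by
    set r : Monoid.CoprodI (fun _ : Bool => Multiplicative k0) →*
        Monoid.Coprod (Multiplicative k0) (Multiplicative k0) :=
      Monoid.CoprodI.lift (fun b : Bool => bif b then Monoid.Coprod.inl else Monoid.Coprod.inr)
      with hr
    have hretr : r.comp e = MonoidHom.id _ := by
      apply Monoid.Coprod.hom_ext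
      · ext c
        simp [he, hr, Monoid.Coprod.lift_apply_inl, Monoid.CoprodI.lift_of]
      · ext c
        simp [he, hr, Monoid.Coprod.lift_apply_inr, Monoid.CoprodI.lift_of]
    intro z w hzw
    have := congrArg r hzw
    simpa using (DFunLike.congr_fun hretr z).symm.trans
      ((congrArg r hzw).trans (DFunLike.congr_fun hretr w))
  constructor
  · rw [← hcomp]
    exact hinj.comp heinj
  · intro hcard
    have hex : ∃ uu vv : k0, uu ≠ 0 ∧ vv ≠ 0 ∧ uu ≠ vv := by
      by_contra hno
      push_neg at hno
      apply hcard
      rw [Nat.card_eq_two_iff]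
      have h10 : (1 : k0) ≠ 0 := one_ne_zero
      refine ⟨0, 1, fun h01 => h10 h01.symm, ?_⟩
      ext z
      simp only [Set.mem_insert_iff, Set.mem_singleton_iff, Set.mem_univ, iff_true]
      by_cases hz : z = 0
      · exact Or.inl hz
      · exact Or.inr (hno z 1 hz h10)
    obtain ⟨uu, vv, huu, hvv, huv⟩ := hex
    set MM : Fin 2 → Multiplicative k0 :=
      fun i => Multiplicative.ofAdd (if i = 0 then uu else vv) with hMM
    have hMval : ∀ i : Fin 2, Multiplicative.toAdd (MM i) = if i = 0 then uu else vv :=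
      fun i => rfl
    have hM1 : ∀ i, MM i ≠ 1 := by
      intro i hone
      have h0 : (if i = 0 then uu else vv) = 0 := by
        rw [← hMval i, hone]; rfl
      split at h0
      · exact huu h0
      · exact hvv h0
    have hMinj : ∀ i i' : Fin 2, i ≠ i' → MM i ≠ MM i' := by
      intro i i' hne hEq
      have h0 : (if i = 0 then uu else vv) = (if i' = 0 then uu else vv) := by
        rw [← hMval i, ← hMval i', hEq]
      fin_cases i <;> fin_cases i'
      · exact hne rfl
      · simp only [Fin.isValue, if_pos, if_neg, Fin.zero_eta, Fin.mk_one, one_ne_zero,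
          ite_true, ite_false, reduceIte] at h0
        exact huv h0
      · simp only [Fin.isValue, if_pos, if_neg, Fin.zero_eta, Fin.mk_one, one_ne_zero,
          ite_true, ite_false, reduceIte] at h0
        exact huv h0.symm
      · exact hne rfl
    have hfg := fg_injective f' (fun {i j} w => key w) MM MM hM1 hM1 hMinj hMinj
    exact ⟨(FreeGroup.lift fun i => f' true (MM i) * f' false (MM i)).range,
      ⟨(MonoidHom.ofInjective hfg).symm⟩⟩
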